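/- Suppose the Kunz polytope P_{G,m,A,{r_α}} is admissible, let (x_α) be an integer point of P_{G,m,A,{r_α}}, and set 𝒫 := Kunz(ρ(x_α); m). Then the operation ⊕ on 𝒫^∞ := 𝒫 ∪ {∞} is commutative and associative, and for α, β ∈ 𝒫, α divides β in (𝒫^∞, ⊕) if and only if α ≼ β; that is, the divisibility preorder of 𝒫 under ⊕ coincides with the preorder ≼ of Kunz(ρ(x_α); m). -/

import Mathlib

namespace PaperKunz

variable {G : Type*} [AddCommGroup G]

/-- The canonical projection `π : G → G/⟨m⟩`. -/
def qproj (m : G) : G →+ G ⧸ AddSubgroup.zmultiples m :=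
  QuotientAddGroup.mk' (AddSubgroup.zmultiples m)

/-- The Apéry set `Ap(S; m) = {s ∈ S : s - m ∉ S}`. -/
def ApSet (S : AddSubmonoid G) (m : G) : Set G := {s | s ∈ S ∧ s - m ∉ S}

/-- `s` is infinitely divisible by `m` in `S`. -/
def InfDiv (S : AddSubmonoid G) (m : G) (s : G) : Prop := ∀ p : ℕ, s - p • m ∈ S

/-- The Kunz polytope `P_{G,m,A,{r_α}}`, cut out in `ℝ^A` by the inequalities
`x_α + x_β + d_{α,β} ≥ x_{α+β}`. -/
def KPoly (m : G) (A : AddSubmonoid (G ⧸ AddSubgroup.zmultiples m)) (d : A → A → ℤ) :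
    Set (A → ℝ) :=
  {x | ∀ α β : A, x (α + β) ≤ x α + x β + (d α β : ℝ)}

/-- A face of the Kunz polytope: the subset where the inequalities indexed by some
`C ⊆ A × A` hold with equality. -/
def IsFace (m : G) (A : AddSubmonoid (G ⧸ AddSubgroup.zmultiples m)) (d : A → A → ℤ)
    (F : Set (A → ℝ)) : Prop :=
  ∃ C : Set (A × A),
    F = {x ∈ KPoly m A d | ∀ p ∈ C, x p.1 + x p.2 + (d p.1 p.2 : ℝ) = x (p.1 + p.2)}

/-- The interior of a face `F`: the points of `F` not contained in any face properly
contained in `F`. -/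
def FaceInt (m : G) (A : AddSubmonoid (G ⧸ AddSubgroup.zmultiples m)) (d : A → A → ℤ)
    (F : Set (A → ℝ)) : Set (A → ℝ) :=
  {x ∈ F | ∀ F', IsFace m A d F' → F' ⊂ F → x ∉ F'}

/-- The correspondence `ρ` sending an integer point `(x_α)` to the monoid
`⟨{m} ∪ {x_α·m + r_α : α ∈ A}⟩`. -/
def rho (m : G) (A : AddSubmonoid (G ⧸ AddSubgroup.zmultiples m)) (r : A → G)
    (x : A → ℤ) : AddSubmonoid G :=
  AddSubmonoid.closure ({m} ∪ Set.range fun α : A => x α • m + r α)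

/-- The conditions in the statement of the correspondence: `m ∈ S`, `gp(S) = G`,
`A = π(Ap(S;m))`, and no element of `S` is infinitely divisible by `m`. -/
def GoodMonoid (m : G) (A : AddSubmonoid (G ⧸ AddSubgroup.zmultiples m))
    (S : AddSubmonoid G) : Prop :=
  m ∈ S ∧ AddSubgroup.closure (S : Set G) = ⊤ ∧
    ⇑(qproj m) '' ApSet S m = (A : Set (G ⧸ AddSubgroup.zmultiples m)) ∧
    ∀ s ∈ S, ¬ InfDiv S m s

/-- Admissibility of the Kunz polytope. -/
def Admissible (m : G) (A : AddSubmonoid (G ⧸ AddSubgroup.zmultiples m)) (r : A → G)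
    (d : A → A → ℤ) : Prop :=
  ∃ x : A → ℤ, (fun α => (x α : ℝ)) ∈ KPoly m A d ∧ GoodMonoid m A (rho m A r x)

/-- The Kunz preorder `≼` of `Kunz(S; m)` on `G/⟨m⟩`:
`π(s) ≼ π(t)` for `s, t ∈ Ap(S;m)` iff `t - s ∈ S`. -/
def KunzLE (S : AddSubmonoid G) (m : G) (α β : G ⧸ AddSubgroup.zmultiples m) : Prop :=
  ∃ s t : G, s ∈ ApSet S m ∧ t ∈ ApSet S m ∧ qproj m s = α ∧ qproj m t = β ∧ t - s ∈ S

open Classical in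
/-- The operation `⊕` on `𝒫^∞ = 𝒫 ∪ {∞}` (with `∞` encoded as `none`):
`α ⊕ β = α + β` if `α ≼ α + β`, and `∞` otherwise. -/
noncomputable def oplus (S : AddSubmonoid G) (m : G)
    (A : AddSubmonoid (G ⧸ AddSubgroup.zmultiples m)) :
    Option A → Option A → Option A
  | some α, some β =>
      if KunzLE S m (α : G ⧸ AddSubgroup.zmultiples m) ((α + β : A) : G ⧸ AddSubgroup.zmultiples m)
      then some (α + β) else none
  | _, _ => none

/-- A unit of `(𝒫^∞, ⊕)`. -/
def oUnit (S : AddSubmonoid G) (m : G) (A : AddSubmonoid (G ⧸ AddSubgroup.zmultiples m))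
    (a : Option A) : Prop :=
  ∃ b, oplus S m A a b = some 0

/-- An atom of `(𝒫^∞, ⊕)`: a nonzero nonunit which splits only through units. -/
def oAtom (S : AddSubmonoid G) (m : G) (A : AddSubmonoid (G ⧸ AddSubgroup.zmultiples m))
    (a : Option A) : Prop :=
  a ≠ some 0 ∧ ¬ oUnit S m A a ∧
    ∀ b c, oplus S m A b c = a → oUnit S m A b ∨ oUnit S m A c

/-- The iterated `⊕`-sum of a list of elements of `𝒫`. -/
noncomputable def oplusList (S : AddSubmonoid G) (m : G)
    (A : AddSubmonoid (G ⧸ AddSubgroup.zmultiples m)) (l : List A) : Option A :=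
  l.foldr (fun α acc => oplus S m A (some α) acc) (some 0)

/-- `Z_{𝒫^∞}(∞)`: finitely supported tuples over the atoms of `𝒫^∞` whose iterated
`⊕`-sum equals `∞`. -/
def Zinf (S : AddSubmonoid G) (m : G) (A : AddSubmonoid (G ⧸ AddSubgroup.zmultiples m)) :
    Set (A →₀ ℕ) :=
  {c | (∀ α ∈ c.support, oAtom S m A (some α)) ∧
    ∃ l : List A, (l : Multiset A) = Finsupp.toMultiset c ∧ oplusList S m A l = none}

/-- `min_≤ Z_{𝒫^∞}(∞)`: its minimal elements under the coordinatewise order. -/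
def minZinf (S : AddSubmonoid G) (m : G)
    (A : AddSubmonoid (G ⧸ AddSubgroup.zmultiples m)) : Set (A →₀ ℕ) :=
  {c ∈ Zinf S m A | ∀ c' ∈ Zinf S m A, c' ≤ c → c' = c}

/-- The preorder `⊑_S` on `min_≤ Z_{𝒫^∞}(∞)`: with `β = Σ c_α·α`, `β' = Σ c'_α·α`,
`δ = β' - β` and `b` the unique integer with `b·m = r_δ + Σ (c_α - c'_α)·r_α`,
`(c_α) ⊑_S (c'_α)` iff `-x_δ + Σ (c'_α - c_α)·x_α ≥ b`. -/
def sqle (m : G) (A : AddSubmonoid (G ⧸ AddSubgroup.zmultiples m)) (r : A → G)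
    (x : A → ℤ) (c c' : A →₀ ℕ) : Prop :=
  ∃ (δ : A) (b : ℤ),
    (c.sum fun α n => n • α) + δ = (c'.sum fun α n => n • α) ∧
    b • m = r δ + ((c.sum fun α n => n • r α) - c'.sum fun α n => n • r α) ∧
    b ≤ - x δ + ((c'.sum fun α n => (n : ℤ) * x α) - c.sum fun α n => (n : ℤ) * x α)

/-- `pmin_{⊑_S} min_≤ Z_{𝒫^∞}(∞)`: the pseudominimal elements. -/
def pminZ (S : AddSubmonoid G) (m : G) (A : AddSubmonoid (G ⧸ AddSubgroup.zmultiples m))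
    (r : A → G) (x : A → ℤ) : Set (A →₀ ℕ) :=
  {c ∈ minZinf S m A | ∀ c' ∈ minZinf S m A, sqle m A r x c' c → sqle m A r x c c'}

/-- A unit of the monoid `S`. -/
def subUnit (S : AddSubmonoid G) (u : G) : Prop := u ∈ S ∧ -u ∈ S

/-- An atom of the monoid `S`. -/
def subAtom (S : AddSubmonoid G) (a : G) : Prop :=
  a ∈ S ∧ a ≠ 0 ∧ ¬ subUnit S a ∧
    ∀ b c, b ∈ S → c ∈ S → b + c = a → subUnit S b ∨ subUnit S c

/-- The set of factorizations of `s` into atoms of the (reduced) monoid `S`. -/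
def ZS (S : AddSubmonoid G) (s : G) : Set (G →₀ ℕ) :=
  {c | (∀ a ∈ c.support, subAtom S a) ∧ (c.sum fun a n => n • a) = s}

/-- The longest factorization length `L(s)` in `S`. -/
noncomputable def LS (S : AddSubmonoid G) (s : G) : ℕ :=
  sSup ((fun c : G →₀ ℕ => c.sum fun _ n => n) '' ZS S s)

/-- The shortest factorization length `ℓ(s)` in `S`. -/
noncomputable def lS (S : AddSubmonoid G) (s : G) : ℕ :=
  sInf ((fun c : G →₀ ℕ => c.sum fun _ n => n) '' ZS S s)

/-- `L(s)` is (defined and) finite in `S`. -/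
def LFiniteS (S : AddSubmonoid G) (s : G) : Prop :=
  (ZS S s).Nonempty ∧ BddAbove ((fun c : G →₀ ℕ => c.sum fun _ n => n) '' ZS S s)

/-- The set of factorization lengths of `v` in `(𝒫^∞, ⊕)`. -/
def oLenSet (S : AddSubmonoid G) (m : G) (A : AddSubmonoid (G ⧸ AddSubgroup.zmultiples m))
    (v : Option A) : Set ℕ :=
  {n | ∃ l : List A, (∀ α ∈ l, oAtom S m A (some α)) ∧ oplusList S m A l = v ∧ l.length = n}

/-- The longest factorization length `L_{𝒫^∞}(v)`. -/
noncomputable def oL (S : AddSubmonoid G) (m : G)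
    (A : AddSubmonoid (G ⧸ AddSubgroup.zmultiples m)) (v : Option A) : ℕ :=
  sSup (oLenSet S m A v)

/-- The shortest factorization length `ℓ_{𝒫^∞}(v)`. -/
noncomputable def oell (S : AddSubmonoid G) (m : G)
    (A : AddSubmonoid (G ⧸ AddSubgroup.zmultiples m)) (v : Option A) : ℕ :=
  sInf (oLenSet S m A v)
section Aux16

variable {G : Type*} [AddCommGroup G]

open Classical in
/-- The Apéry representative of the class `γ`. -/
noncomputable def Wf (m : G) {A : AddSubmonoid (G ⧸ AddSubgroup.zmultiples m)}
    (r : A → G) (x : A → ℤ) (γ : A) : G :=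
  if γ = 0 then 0 else x γ • m + r γ

variable {m : G} {A : AddSubmonoid (G ⧸ AddSubgroup.zmultiples m)}
  {r : A → G} {d : A → A → ℤ} {x : A → ℤ}

lemma zsmul_inj16 (hm : ¬ IsOfFinAddOrder m) {a b : ℤ} (h : a • m = b • m) : a = b := by
  by_contra hab
  exact hm (isOfFinAddOrder_iff_zsmul_eq_zero.mpr
    ⟨a - b, sub_ne_zero.mpr hab, by rw [sub_zsmul, h]; simp⟩)

lemma Wf_zero : Wf m r x (0 : A) = 0 := by simp [Wf]

lemma Wf_ne {γ : A} (h : γ ≠ 0) : Wf m r x γ = x γ • m + r γ := by simp [Wf, h]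

lemma qm16 : qproj m m = 0 :=
  (QuotientAddGroup.eq_zero_iff m).mpr (AddSubgroup.mem_zmultiples m)

lemma qW16 (hr : ∀ α : A, qproj m (r α) = (α : G ⧸ AddSubgroup.zmultiples m)) (γ : A) :
    qproj m (Wf m r x γ) = (γ : G ⧸ AddSubgroup.zmultiples m) := by
  by_cases h : γ = 0
  · subst h; simp [Wf]
  · rw [Wf_ne h, map_add, map_zsmul, qm16, hr, smul_zero, zero_add]

lemma hxZ16 (hx : (fun α => (x α : ℝ)) ∈ KPoly m A d) (α β : A) :
    x (α + β) ≤ x α + x β + d α β := by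
  have h : ((x (α + β) : ℝ)) ≤ (x α : ℝ) + (x β : ℝ) + (d α β : ℝ) := hx α β
  exact_mod_cast h

lemma hr016 (hd : ∀ α β : A, r α + r β = d α β • m + r (α + β)) :
    r (0 : A) = d 0 0 • m := by
  have h := hd 0 0
  rw [add_zero] at h
  exact add_right_cancel h

lemma wkey16 (hd : ∀ α β : A, r α + r β = d α β • m + r (α + β)) (α β : A) :
    (x α • m + r α) + (x β • m + r β)
      = (x α + x β + d α β - x (α + β)) • m + (x (α + β) • m + r (α + β)) := by
  calc (x α • m + r α) + (x β • m + r β) = (x α + x β) • m + (r α + r β) := by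
        module
    _ = (x α + x β) • m + (d α β • m + r (α + β)) := by rw [hd]
    _ = (x α + x β + d α β - x (α + β)) • m + (x (α + β) • m + r (α + β)) := by
        module

lemma wadd16 (hd : ∀ α β : A, r α + r β = d α β • m + r (α + β))
    (hx : (fun α => (x α : ℝ)) ∈ KPoly m A d) (α β : A) :
    ∃ n : ℤ, 0 ≤ n ∧ Wf m r x α + Wf m r x β = n • m + Wf m r x (α + β) := by
  by_cases hα : α = 0
  · subst hα
    refine ⟨0, le_refl 0, ?_⟩
    simp [Wf_zero]
  by_cases hβ : β = 0
  · subst hβ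
    refine ⟨0, le_refl 0, ?_⟩
    simp [Wf_zero]
  by_cases hs : α + β = 0
  · refine ⟨x α + x β + d α β + d 0 0, ?_, ?_⟩
    · have h1 := hxZ16 hx α β
      have h2 := hxZ16 hx 0 0
      rw [hs] at h1
      rw [add_zero] at h2
      linarith
    · have hw := wkey16 (x := x) hd α β
      rw [hs, hr016 hd] at hw
      rw [Wf_ne hα, Wf_ne hβ, hs, Wf_zero, hw]
      module
  · refine ⟨x α + x β + d α β - x (α + β), sub_nonneg.mpr (hxZ16 hx α β), ?_⟩
    rw [Wf_ne hα, Wf_ne hβ, Wf_ne hs]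
    exact wkey16 (x := x) hd α β

lemma mem_rho_iff16 (hd : ∀ α β : A, r α + r β = d α β • m + r (α + β))
    (hx : (fun α => (x α : ℝ)) ∈ KPoly m A d) {s : G} :
    s ∈ rho m A r x ↔ ∃ n : ℤ, 0 ≤ n ∧ ∃ γ : A, s = n • m + Wf m r x γ := by
  constructor
  · intro hs
    induction hs using AddSubmonoid.closure_induction with
    | mem y hy =>
        rcases hy with hy | ⟨α, rfl⟩
        · rcases hy with rfl
          exact ⟨1, by norm_num, 0, by simp [Wf_zero]⟩
        · by_cases hα : α = 0
          · subst hα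
            refine ⟨x 0 + d 0 0, ?_, 0, ?_⟩
            · have h2 := hxZ16 hx 0 0
              rw [add_zero] at h2
              linarith
            · show x (0 : A) • m + r 0 = (x 0 + d 0 0) • m + Wf m r x 0
              rw [Wf_zero, add_zero, hr016 hd, add_zsmul]
          · exact ⟨0, le_refl 0, α, by simp [Wf_ne hα]⟩
    | zero => exact ⟨0, le_refl 0, 0, by simp [Wf_zero]⟩
    | add a b ha hb iha ihb =>
        obtain ⟨n, hn, γ, rfl⟩ := iha
        obtain ⟨n', hn', γ', rfl⟩ := ihb
        obtain ⟨k, hk, hkw⟩ := wadd16 hd hx γ γ'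
        refine ⟨n + n' + k, by linarith, γ + γ', ?_⟩
        rw [add_zsmul, add_zsmul]
        rw [show n • m + Wf m r x γ + (n' • m + Wf m r x γ')
            = n • m + n' • m + (Wf m r x γ + Wf m r x γ') by abel, hkw]
        abel
  · rintro ⟨n, hn, γ, rfl⟩
    have hm' : m ∈ rho m A r x :=
      AddSubmonoid.subset_closure (Set.mem_union_left _ rfl)
    have hW : Wf m r x γ ∈ rho m A r x := by
      by_cases hγ : γ = 0
      · subst hγ; rw [Wf_zero]; exact zero_mem _
      · rw [Wf_ne hγ]
        exact AddSubmonoid.subset_closure (Set.mem_union_right _ ⟨γ, rfl⟩)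
    have hnm : n • m = n.toNat • m := by rw [← natCast_zsmul, Int.toNat_of_nonneg hn]
    rw [hnm]
    exact add_mem (nsmul_mem hm' _) hW

lemma class_mem16 (hr : ∀ α : A, qproj m (r α) = (α : G ⧸ AddSubgroup.zmultiples m))
    (hd : ∀ α β : A, r α + r β = d α β • m + r (α + β))
    (hx : (fun α => (x α : ℝ)) ∈ KPoly m A d) {s : G} (hs : s ∈ rho m A r x) {γ : A}
    (hq : qproj m s = (γ : G ⧸ AddSubgroup.zmultiples m)) :
    ∃ n : ℤ, 0 ≤ n ∧ s = n • m + Wf m r x γ := by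
  obtain ⟨n, hn, γ', rfl⟩ := (mem_rho_iff16 hd hx).mp hs
  have hγ : (γ' : G ⧸ AddSubgroup.zmultiples m) = (γ : G ⧸ AddSubgroup.zmultiples m) := by
    rw [← hq, map_add, map_zsmul, qm16, smul_zero, zero_add, qW16 hr]
  obtain rfl : γ' = γ := Subtype.coe_injective hγ
  exact ⟨n, hn, rfl⟩

lemma W_mem16 (hd : ∀ α β : A, r α + r β = d α β • m + r (α + β))
    (hx : (fun α => (x α : ℝ)) ∈ KPoly m A d) (γ : A) :
    Wf m r x γ ∈ rho m A r x :=
  (mem_rho_iff16 hd hx).mpr ⟨0, le_refl 0, γ, by rw [zero_zsmul, zero_add]⟩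

lemma W_mem_Ap16 (hm : ¬ IsOfFinAddOrder m)
    (hr : ∀ α : A, qproj m (r α) = (α : G ⧸ AddSubgroup.zmultiples m))
    (hd : ∀ α β : A, r α + r β = d α β • m + r (α + β))
    (hx : (fun α => (x α : ℝ)) ∈ KPoly m A d) (γ : A) :
    Wf m r x γ ∈ ApSet (rho m A r x) m := by
  refine ⟨W_mem16 hd hx γ, ?_⟩
  intro hc
  have hq : qproj m (Wf m r x γ - m) = (γ : G ⧸ AddSubgroup.zmultiples m) := by
    rw [map_sub, qW16 hr, qm16, sub_zero]
  obtain ⟨n, hn, hc'⟩ := class_mem16 hr hd hx hc hq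
  have h3 : Wf m r x γ + (-1 : ℤ) • m = Wf m r x γ + n • m := by
    rw [neg_zsmul, one_zsmul, ← sub_eq_add_neg, hc']; abel
  have := zsmul_inj16 hm (add_left_cancel h3)
  omega

lemma ap_eq16 (hm : ¬ IsOfFinAddOrder m)
    (hr : ∀ α : A, qproj m (r α) = (α : G ⧸ AddSubgroup.zmultiples m))
    (hd : ∀ α β : A, r α + r β = d α β • m + r (α + β))
    (hx : (fun α => (x α : ℝ)) ∈ KPoly m A d) {s : G}
    (hs : s ∈ ApSet (rho m A r x) m) {γ : A}
    (hq : qproj m s = (γ : G ⧸ AddSubgroup.zmultiples m)) : s = Wf m r x γ := by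
  obtain ⟨n, hn, hsn⟩ := class_mem16 hr hd hx hs.1 hq
  rcases eq_or_lt_of_le hn with h0 | h0
  · rw [hsn, ← h0, zero_zsmul, zero_add]
  · exfalso
    apply hs.2
    refine (mem_rho_iff16 hd hx).mpr ⟨n - 1, by omega, γ, ?_⟩
    rw [hsn, sub_zsmul, one_zsmul]; abel

lemma kunz_iff16 (hm : ¬ IsOfFinAddOrder m)
    (hr : ∀ α : A, qproj m (r α) = (α : G ⧸ AddSubgroup.zmultiples m))
    (hd : ∀ α β : A, r α + r β = d α β • m + r (α + β))
    (hx : (fun α => (x α : ℝ)) ∈ KPoly m A d) (α β : A) :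
    KunzLE (rho m A r x) m α β ↔ Wf m r x β - Wf m r x α ∈ rho m A r x := by
  constructor
  · rintro ⟨s, t, hs, ht, hqs, hqt, hst⟩
    rw [ap_eq16 hm hr hd hx hs hqs, ap_eq16 hm hr hd hx ht hqt] at hst
    exact hst
  · intro h
    exact ⟨Wf m r x α, Wf m r x β, W_mem_Ap16 hm hr hd hx α, W_mem_Ap16 hm hr hd hx β,
      qW16 hr α, qW16 hr β, h⟩

lemma cancel216 (hm : ¬ IsOfFinAddOrder m) {u : G} {n₁ n₂ : ℤ}
    (hn₁ : 0 ≤ n₁) (hn₂ : 0 ≤ n₂) (h : u = n₁ • m + (n₂ • m + u)) : n₁ = 0 ∧ n₂ = 0 := by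
  have h2 : (0 : ℤ) • m + u = (n₁ + n₂) • m + u := by
    rw [zero_zsmul, zero_add, add_zsmul]
    calc u = n₁ • m + (n₂ • m + u) := h
      _ = n₁ • m + n₂ • m + u := by abel
  have h0 := zsmul_inj16 hm (add_right_cancel h2)
  omega

lemma wadd_eq16 (hm : ¬ IsOfFinAddOrder m)
    (hd : ∀ α β : A, r α + r β = d α β • m + r (α + β))
    (hx : (fun α => (x α : ℝ)) ∈ KPoly m A d) {α γ β : A} (hsum : α + γ = β) {n : ℤ}
    (hn : 0 ≤ n) (h1 : Wf m r x β - Wf m r x α = n • m + Wf m r x γ) :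
    Wf m r x α + Wf m r x γ = Wf m r x β := by
  obtain ⟨n₁, hn₁, hW⟩ := wadd16 hd hx α γ
  rw [hsum] at hW
  have hkey : Wf m r x β = n • m + (n₁ • m + Wf m r x β) := by
    have h1' : Wf m r x β = n • m + Wf m r x γ + Wf m r x α := by rw [← h1]; abel
    calc Wf m r x β = n • m + Wf m r x γ + Wf m r x α := h1'
      _ = n • m + (Wf m r x α + Wf m r x γ) := by abel
      _ = n • m + (n₁ • m + Wf m r x β) := by rw [hW]
  obtain ⟨-, h2⟩ := cancel216 hm hn hn₁ hkey
  rw [h2, zero_zsmul, zero_add] at hW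
  exact hW

lemma div_forward16 (hm : ¬ IsOfFinAddOrder m)
    (hr : ∀ α : A, qproj m (r α) = (α : G ⧸ AddSubgroup.zmultiples m))
    (hd : ∀ α β : A, r α + r β = d α β • m + r (α + β))
    (hx : (fun α => (x α : ℝ)) ∈ KPoly m A d) {α β : A}
    (h : KunzLE (rho m A r x) m α β) :
    ∃ γ : A, α + γ = β ∧ Wf m r x α + Wf m r x γ = Wf m r x β := by
  have h' := (kunz_iff16 hm hr hd hx α β).mp h
  obtain ⟨n, hn, γ, hγ⟩ := (mem_rho_iff16 hd hx).mp h'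
  have hq : ((α + γ : A) : G ⧸ AddSubgroup.zmultiples m) = (β : G ⧸ AddSubgroup.zmultiples m) := by
    have h2 := congrArg (qproj m) hγ
    simp only [map_sub, map_add, map_zsmul, qm16, smul_zero, zero_add, qW16 hr] at h2
    rw [AddSubmonoid.coe_add, ← h2]
    abel
  have hβ : α + γ = β := Subtype.coe_injective hq
  exact ⟨γ, hβ, wadd_eq16 hm hd hx hβ hn hγ⟩

lemma kunz_add_iff16 (hm : ¬ IsOfFinAddOrder m)
    (hr : ∀ α : A, qproj m (r α) = (α : G ⧸ AddSubgroup.zmultiples m))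
    (hd : ∀ α β : A, r α + r β = d α β • m + r (α + β))
    (hx : (fun α => (x α : ℝ)) ∈ KPoly m A d) (α β : A) :
    KunzLE (rho m A r x) m α ((α + β : A) : G ⧸ AddSubgroup.zmultiples m) ↔
      Wf m r x α + Wf m r x β = Wf m r x (α + β) := by
  constructor
  · intro h
    obtain ⟨γ, hsum, heq⟩ := div_forward16 hm hr hd hx h
    obtain rfl : γ = β := by
      have := congrArg (fun t : A => (t : G ⧸ AddSubgroup.zmultiples m)) hsum
      simp only [AddSubmonoid.coe_add] at this
      exact Subtype.coe_injective (add_left_cancel this)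
    exact heq
  · intro h
    rw [kunz_iff16 hm hr hd hx]
    rw [← h, show Wf m r x α + Wf m r x β - Wf m r x α = Wf m r x β by abel]
    exact W_mem16 hd hx β

lemma assocL16 (hm : ¬ IsOfFinAddOrder m)
    (hd : ∀ α β : A, r α + r β = d α β • m + r (α + β))
    (hx : (fun α => (x α : ℝ)) ∈ KPoly m A d) {α β γ : A}
    (h1 : Wf m r x α + Wf m r x β = Wf m r x (α + β))
    (h2 : Wf m r x (α + β) + Wf m r x γ = Wf m r x (α + β + γ)) :
    Wf m r x β + Wf m r x γ = Wf m r x (β + γ) ∧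
      Wf m r x α + Wf m r x (β + γ) = Wf m r x (α + (β + γ)) := by
  obtain ⟨n₁, hn₁, hW1⟩ := wadd16 hd hx β γ
  obtain ⟨n₂, hn₂, hW2⟩ := wadd16 hd hx α (β + γ)
  rw [add_assoc] at h2
  have hkey : Wf m r x (α + (β + γ))
      = n₁ • m + (n₂ • m + Wf m r x (α + (β + γ))) := by
    calc Wf m r x (α + (β + γ)) = Wf m r x (α + β) + Wf m r x γ := h2.symm
      _ = Wf m r x α + Wf m r x β + Wf m r x γ := by rw [h1]
      _ = Wf m r x α + (Wf m r x β + Wf m r x γ) := by abel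
      _ = Wf m r x α + (n₁ • m + Wf m r x (β + γ)) := by rw [hW1]
      _ = n₁ • m + (Wf m r x α + Wf m r x (β + γ)) := by abel
      _ = n₁ • m + (n₂ • m + Wf m r x (α + (β + γ))) := by rw [hW2]
  obtain ⟨e1, e2⟩ := cancel216 hm hn₁ hn₂ hkey
  rw [e1, zero_zsmul, zero_add] at hW1
  rw [e2, zero_zsmul, zero_add] at hW2
  exact ⟨hW1, hW2⟩

lemma assocR16 (hm : ¬ IsOfFinAddOrder m)
    (hd : ∀ α β : A, r α + r β = d α β • m + r (α + β))
    (hx : (fun α => (x α : ℝ)) ∈ KPoly m A d) {α β γ : A}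
    (h1 : Wf m r x β + Wf m r x γ = Wf m r x (β + γ))
    (h2 : Wf m r x α + Wf m r x (β + γ) = Wf m r x (α + (β + γ))) :
    Wf m r x α + Wf m r x β = Wf m r x (α + β) ∧
      Wf m r x (α + β) + Wf m r x γ = Wf m r x (α + β + γ) := by
  obtain ⟨n₁, hn₁, hW1⟩ := wadd16 hd hx α β
  obtain ⟨n₂, hn₂, hW2⟩ := wadd16 hd hx (α + β) γ
  rw [add_assoc] at hW2
  have hkey : Wf m r x (α + (β + γ))
      = n₁ • m + (n₂ • m + Wf m r x (α + (β + γ))) := by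
    calc Wf m r x (α + (β + γ)) = Wf m r x α + Wf m r x (β + γ) := h2.symm
      _ = Wf m r x α + (Wf m r x β + Wf m r x γ) := by rw [h1]
      _ = Wf m r x α + Wf m r x β + Wf m r x γ := by abel
      _ = n₁ • m + Wf m r x (α + β) + Wf m r x γ := by rw [hW1]
      _ = n₁ • m + (Wf m r x (α + β) + Wf m r x γ) := by abel
      _ = n₁ • m + (n₂ • m + Wf m r x (α + (β + γ))) := by rw [hW2]
  obtain ⟨e1, e2⟩ := cancel216 hm hn₁ hn₂ hkey
  rw [e1, zero_zsmul, zero_add] at hW1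
  rw [e2, zero_zsmul, zero_add, ← add_assoc] at hW2
  exact ⟨hW1, hW2⟩

end Aux16

theorem statement16 (m : G) (hm : ¬ IsOfFinAddOrder m)
    (A : AddSubmonoid (G ⧸ AddSubgroup.zmultiples m))
    (r : A → G) (hr : ∀ α : A, qproj m (r α) = (α : G ⧸ AddSubgroup.zmultiples m))
    (d : A → A → ℤ) (hd : ∀ α β : A, r α + r β = d α β • m + r (α + β))
    (hadm : Admissible m A r d)
    (x : A → ℤ) (hx : (fun α => (x α : ℝ)) ∈ KPoly m A d) :
    (∀ a b : Option A, oplus (rho m A r x) m A a b = oplus (rho m A r x) m A b a) ∧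
    (∀ a b c : Option A,
      oplus (rho m A r x) m A (oplus (rho m A r x) m A a b) c =
        oplus (rho m A r x) m A a (oplus (rho m A r x) m A b c)) ∧
    (∀ α β : A,
      (∃ γ : Option A, oplus (rho m A r x) m A (some α) γ = some β) ↔
        KunzLE (rho m A r x) m α β) := by
  classical
  have hcond : ∀ α β : A, KunzLE (rho m A r x) m α
        ((α + β : A) : G ⧸ AddSubgroup.zmultiples m) ↔
      Wf m r x α + Wf m r x β = Wf m r x (α + β) := kunz_add_iff16 hm hr hd hx
  have hsome : ∀ α β : A, oplus (rho m A r x) m A (some α) (some β) =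
      if KunzLE (rho m A r x) m α ((α + β : A) : G ⧸ AddSubgroup.zmultiples m)
      then some (α + β) else none := fun α β => rfl
  have hnl : ∀ b, oplus (rho m A r x) m A none b = none := fun b => by cases b <;> rfl
  have hnr : ∀ a, oplus (rho m A r x) m A a none = none := fun a => by cases a <;> rfl
  refine ⟨?_, ?_, ?_⟩
  · intro a b
    match a, b with
    | none, none => rfl
    | none, some β => rfl
    | some α, none => rfl
    | some α, some β =>
      rw [hsome α β, hsome β α]
      have hswap : Wf m r x β + Wf m r x α = Wf m r x (β + α) ↔
          Wf m r x α + Wf m r x β = Wf m r x (α + β) := by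
        rw [add_comm β α, add_comm (Wf m r x β)]
      by_cases hc : Wf m r x α + Wf m r x β = Wf m r x (α + β)
      · rw [if_pos ((hcond α β).mpr hc), if_pos ((hcond β α).mpr (hswap.mpr hc)),
          add_comm β α]
      · rw [if_neg (fun h => hc ((hcond α β).mp h)),
          if_neg (fun h => hc (hswap.mp ((hcond β α).mp h)))]
  · intro a b c
    match a, b, c with
    | none, b, c => simp only [hnl]
    | some α, none, c => simp only [hnl, hnr]
    | some α, some β, none => simp only [hnl, hnr]
    | some α, some β, some γ =>
      rw [hsome α β, hsome β γ]
      by_cases h1 : Wf m r x α + Wf m r x β = Wf m r x (α + β)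
      · rw [if_pos ((hcond α β).mpr h1), hsome (α + β) γ]
        by_cases h2 : Wf m r x (α + β) + Wf m r x γ = Wf m r x (α + β + γ)
        · obtain ⟨h3, h4⟩ := assocL16 hm hd hx h1 h2
          rw [if_pos ((hcond (α + β) γ).mpr h2), if_pos ((hcond β γ).mpr h3),
            hsome α (β + γ), if_pos ((hcond α (β + γ)).mpr h4), add_assoc]
        · rw [if_neg (fun h => h2 ((hcond (α + β) γ).mp h))]
          by_cases h3 : Wf m r x β + Wf m r x γ = Wf m r x (β + γ)
          · rw [if_pos ((hcond β γ).mpr h3), hsome α (β + γ),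
              if_neg (fun h => h2 (assocR16 hm hd hx h3 ((hcond α (β + γ)).mp h)).2)]
          · rw [if_neg (fun h => h3 ((hcond β γ).mp h)), hnr]
      · rw [if_neg (fun h => h1 ((hcond α β).mp h)), hnl]
        by_cases h3 : Wf m r x β + Wf m r x γ = Wf m r x (β + γ)
        · rw [if_pos ((hcond β γ).mpr h3), hsome α (β + γ),
            if_neg (fun h => h1 (assocR16 hm hd hx h3 ((hcond α (β + γ)).mp h)).1)]
        · rw [if_neg (fun h => h3 ((hcond β γ).mp h)), hnr]
  · intro α β
    constructor
    · rintro ⟨γ, hγ⟩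
      cases γ with
      | none => rw [hnr] at hγ; exact nomatch hγ
      | some γ =>
        rw [hsome α γ] at hγ
        by_cases hc : KunzLE (rho m A r x) m α
            ((α + γ : A) : G ⧸ AddSubgroup.zmultiples m)
        · rw [if_pos hc] at hγ
          obtain rfl : α + γ = β := Option.some.inj hγ
          exact hc
        · rw [if_neg hc] at hγ; exact nomatch hγ
    · intro h
      obtain ⟨γ, hsum, hWeq⟩ := div_forward16 hm hr hd hx h
      refine ⟨some γ, ?_⟩
      rw [← hsum] at hWeq
      rw [hsome α γ, if_pos ((hcond α γ).mpr hWeq), hsum]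


end PaperKunz
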